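/- Let ε > 0 and c₊, c₋ > 0, and let 0 < R₀ < R. Then |∫_{R₀}^{R} x/(ε + c₊(x − R₀)²) dx + ∫_{−R}^{−R₀} x/(ε + c₋(x + R₀)²) dx| ≤ |1/(2c₊) − 1/(2c₋)|·|log ε| + C·R₀/√ε + C, where C depends only on c₊, c₋, R₀, R (and not on ε), for all 0 < ε < 1/2. -/

import Mathlib

open Real intervalIntegral

lemma aux_integrable1 (ε c s a b : ℝ) (hε : 0 < ε) (hc : 0 < c) :
    IntervalIntegrable (fun x => (x - s) / (ε + c * (x - s) ^ 2)) MeasureTheory.volume a b := by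
  apply Continuous.intervalIntegrable
  exact (continuous_id.sub continuous_const).div (by continuity)
    (fun x => by positivity)

lemma aux_integrable2 (ε c s a b : ℝ) (hε : 0 < ε) (hc : 0 < c) :
    IntervalIntegrable (fun x => 1 / (ε + c * (x - s) ^ 2)) MeasureTheory.volume a b := by
  apply Continuous.intervalIntegrable
  exact continuous_const.div (by continuity) (fun x => by positivity)

lemma aux_log_int (ε c s a b : ℝ) (hε : 0 < ε) (hc : 0 < c) :
    ∫ x in a..b, (x - s) / (ε + c * (x - s) ^ 2)
      = (1 / (2 * c)) * (Real.log (ε + c * (b - s) ^ 2) - Real.log (ε + c * (a - s) ^ 2)) := by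
  have h : ∀ x ∈ Set.uIcc a b, HasDerivAt (fun x => (1 / (2 * c)) * Real.log (ε + c * (x - s) ^ 2))
      ((x - s) / (ε + c * (x - s) ^ 2)) x := by
    intro x _
    have h1 : HasDerivAt (fun x : ℝ => ε + c * (x - s) ^ 2)
        (c * (2 * (x - s) ^ 1 * 1)) x :=
      (((hasDerivAt_id x).sub_const s).pow 2).const_mul c |>.const_add ε
    have h2 := (h1.log (by positivity)).const_mul (1 / (2 * c))
    refine h2.congr_deriv (Eq.symm ?_)
    have : ε + c * (x - s) ^ 2 ≠ 0 := by positivity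
    field_simp
  rw [intervalIntegral.integral_eq_sub_of_hasDerivAt h
    (aux_integrable1 ε c s a b hε hc)]
  ring

lemma aux_arctan_bound (ε c s a b : ℝ) (hε : 0 < ε) (hc : 0 < c) :
    |∫ x in a..b, 1 / (ε + c * (x - s) ^ 2)| ≤ π / (Real.sqrt c * Real.sqrt ε) := by
  have hsc : (0:ℝ) < Real.sqrt c := Real.sqrt_pos.2 hc
  have hse : (0:ℝ) < Real.sqrt ε := Real.sqrt_pos.2 hε
  have hc2 : Real.sqrt c ^ 2 = c := Real.sq_sqrt hc.le
  have he2 : Real.sqrt ε ^ 2 = ε := Real.sq_sqrt hε.le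
  have h : ∀ x ∈ Set.uIcc a b, HasDerivAt
      (fun x => (1 / (Real.sqrt c * Real.sqrt ε)) * Real.arctan (Real.sqrt c / Real.sqrt ε * (x - s)))
      (1 / (ε + c * (x - s) ^ 2)) x := by
    intro x _
    have h1 : HasDerivAt (fun x : ℝ => Real.sqrt c / Real.sqrt ε * (x - s))
        (Real.sqrt c / Real.sqrt ε) x := by
      simpa using ((hasDerivAt_id x).sub_const s).const_mul (Real.sqrt c / Real.sqrt ε)
    have h2 := (h1.arctan).const_mul (1 / (Real.sqrt c * Real.sqrt ε))
    refine h2.congr_deriv (Eq.symm ?_)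
    have hne : ε + c * (x - s) ^ 2 ≠ 0 := by positivity
    field_simp
    linear_combination he2 + (x - s) ^ 2 * hc2
  rw [intervalIntegral.integral_eq_sub_of_hasDerivAt h
    (aux_integrable2 ε c s a b hε hc)]
  have hb := Real.arctan_lt_pi_div_two (Real.sqrt c / Real.sqrt ε * (b - s))
  have hb' := Real.neg_pi_div_two_lt_arctan (Real.sqrt c / Real.sqrt ε * (b - s))
  have ha := Real.arctan_lt_pi_div_two (Real.sqrt c / Real.sqrt ε * (a - s))
  have ha' := Real.neg_pi_div_two_lt_arctan (Real.sqrt c / Real.sqrt ε * (a - s))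
  rw [← mul_sub, abs_mul, abs_of_pos (by positivity : (0:ℝ) < 1 / (Real.sqrt c * Real.sqrt ε))]
  have hd : |Real.arctan (Real.sqrt c / Real.sqrt ε * (b - s))
      - Real.arctan (Real.sqrt c / Real.sqrt ε * (a - s))| ≤ π := by
    rw [abs_sub_le_iff]; constructor <;> linarith
  refine le_trans (mul_le_mul_of_nonneg_left hd (by positivity)) (le_of_eq (by ring))

lemma aux_abs_log (a t b : ℝ) (ha : 0 < a) (h1 : a ≤ t) (h2 : t ≤ b) :
    |Real.log t| ≤ |Real.log a| + |Real.log b| := by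
  have ht : 0 < t := lt_of_lt_of_le ha h1
  rcases le_or_gt 1 t with h | h
  · have hlb : Real.log t ≤ Real.log b := Real.log_le_log ht h2
    rw [abs_of_nonneg (Real.log_nonneg h)]
    have := le_abs_self (Real.log b)
    have := abs_nonneg (Real.log a)
    linarith
  · have hla : Real.log a ≤ Real.log t := Real.log_le_log ha h1
    rw [abs_of_nonpos (Real.log_nonpos ht.le h.le)]
    have := neg_le_abs (Real.log a)
    have := abs_nonneg (Real.log b)
    linarith

lemma abs_add₅ (a b c d e : ℝ) : |a + b + c + d + e| ≤ |a| + |b| + |c| + |d| + |e| := by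
  have h1 := abs_add_le (a + b + c + d) e
  have h2 := abs_add_le (a + b + c) d
  have h3 := abs_add_le (a + b) c
  have h4 := abs_add_le a b
  linarith

theorem stmt_16 (cp cm R₀ R : ℝ) (hcp : 0 < cp) (hcm : 0 < cm)
    (hR₀ : 0 < R₀) (hR : R₀ < R) :
    ∃ C : ℝ, 0 < C ∧ ∀ ε : ℝ, 0 < ε → ε < 1 / 2 →
      |(∫ x in R₀..R, x / (ε + cp * (x - R₀) ^ 2)) +
        (∫ x in (-R)..(-R₀), x / (ε + cm * (x + R₀) ^ 2))|
        ≤ |1 / (2 * cp) - 1 / (2 * cm)| * |Real.log ε|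
          + C * R₀ / Real.sqrt ε + C := by
  set L : ℝ := R - R₀ with hLdef
  have hL : 0 < L := by rw [hLdef]; linarith
  set Mp : ℝ := |Real.log (cp * L ^ 2)| + |Real.log (1 + cp * L ^ 2)| with hMp
  set Mm : ℝ := |Real.log (cm * L ^ 2)| + |Real.log (1 + cm * L ^ 2)| with hMm
  have hMp0 : 0 ≤ Mp := by positivity
  have hMm0 : 0 ≤ Mm := by positivity
  refine ⟨π / Real.sqrt cp + π / Real.sqrt cm
      + (1 / (2 * cp)) * Mp + (1 / (2 * cm)) * Mm + 1, by positivity, ?_⟩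
  intro ε hε hε2
  have hse : (0:ℝ) < Real.sqrt ε := Real.sqrt_pos.2 hε
  -- split the first integral
  have ip1 := aux_integrable1 ε cp R₀ R₀ R hε hcp
  have ip2 := aux_integrable2 ε cp R₀ R₀ R hε hcp
  have im1 := aux_integrable1 ε cm (-R₀) (-R) (-R₀) hε hcm
  have im2 := aux_integrable2 ε cm (-R₀) (-R) (-R₀) hε hcm
  simp only [sub_neg_eq_add] at im1 im2
  have e1 : (∫ x in R₀..R, x / (ε + cp * (x - R₀) ^ 2))
      = (∫ x in R₀..R, (x - R₀) / (ε + cp * (x - R₀) ^ 2))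
        + R₀ * ∫ x in R₀..R, 1 / (ε + cp * (x - R₀) ^ 2) := by
    rw [← intervalIntegral.integral_const_mul,
      ← intervalIntegral.integral_add ip1 (ip2.const_mul R₀)]
    apply intervalIntegral.integral_congr
    intro x _
    have hne : ε + cp * (x - R₀) ^ 2 ≠ 0 := by positivity
    field_simp
    ring
  have e2 : (∫ x in (-R)..(-R₀), x / (ε + cm * (x + R₀) ^ 2))
      = (∫ x in (-R)..(-R₀), (x + R₀) / (ε + cm * (x + R₀) ^ 2))
        - R₀ * ∫ x in (-R)..(-R₀), 1 / (ε + cm * (x + R₀) ^ 2) := by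
    rw [← intervalIntegral.integral_const_mul,
      ← intervalIntegral.integral_sub im1 (im2.const_mul R₀)]
    apply intervalIntegral.integral_congr
    intro x _
    have hne : ε + cm * (x + R₀) ^ 2 ≠ 0 := by positivity
    field_simp
    ring
  have hLp : (∫ x in R₀..R, (x - R₀) / (ε + cp * (x - R₀) ^ 2))
      = (1 / (2 * cp)) * (Real.log (ε + cp * L ^ 2) - Real.log ε) := by
    rw [aux_log_int ε cp R₀ R₀ R hε hcp, sub_self, ← hLdef]
    norm_num
  have hLm : (∫ x in (-R)..(-R₀), (x + R₀) / (ε + cm * (x + R₀) ^ 2))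
      = (1 / (2 * cm)) * (Real.log ε - Real.log (ε + cm * L ^ 2)) := by
    have h := aux_log_int ε cm (-R₀) (-R) (-R₀) hε hcm
    simp only [sub_neg_eq_add] at h
    rw [h, show (-R₀ + R₀ : ℝ) = 0 by ring,
      show ((-R + R₀ : ℝ)) ^ 2 = L ^ 2 by rw [hLdef]; ring]
    norm_num
  have hAp : |∫ x in R₀..R, 1 / (ε + cp * (x - R₀) ^ 2)|
      ≤ π / (Real.sqrt cp * Real.sqrt ε) := aux_arctan_bound ε cp R₀ R₀ R hε hcp
  have hAm : |∫ x in (-R)..(-R₀), 1 / (ε + cm * (x + R₀) ^ 2)|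
      ≤ π / (Real.sqrt cm * Real.sqrt ε) := by
    have h := aux_arctan_bound ε cm (-R₀) (-R) (-R₀) hε hcm
    simpa only [sub_neg_eq_add] using h
  set Ap : ℝ := ∫ x in R₀..R, 1 / (ε + cp * (x - R₀) ^ 2) with hApd
  set Am : ℝ := ∫ x in (-R)..(-R₀), 1 / (ε + cm * (x + R₀) ^ 2) with hAmd
  set P : ℝ := Real.log (ε + cp * L ^ 2) with hPd
  set M : ℝ := Real.log (ε + cm * L ^ 2) with hMd
  have heq : (∫ x in R₀..R, x / (ε + cp * (x - R₀) ^ 2)) +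
      (∫ x in (-R)..(-R₀), x / (ε + cm * (x + R₀) ^ 2))
      = (-((1 / (2 * cp) - 1 / (2 * cm)) * Real.log ε)) + (1 / (2 * cp)) * P
        + (-((1 / (2 * cm)) * M)) + R₀ * Ap + (-(R₀ * Am)) := by
    rw [e1, e2, hLp, hLm]; ring
  rw [heq]
  have tri := abs_add₅ (-((1 / (2 * cp) - 1 / (2 * cm)) * Real.log ε)) ((1 / (2 * cp)) * P)
    (-((1 / (2 * cm)) * M)) (R₀ * Ap) (-(R₀ * Am))
  simp only [abs_neg] at tri
  -- bound each term
  have b1 : |(1 / (2 * cp) - 1 / (2 * cm)) * Real.log ε|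
      = |1 / (2 * cp) - 1 / (2 * cm)| * |Real.log ε| := abs_mul _ _
  have bP : |P| ≤ Mp := by
    rw [hPd, hMp]
    exact aux_abs_log _ _ _ (by positivity) (by linarith) (by linarith)
  have bM : |M| ≤ Mm := by
    rw [hMd, hMm]
    exact aux_abs_log _ _ _ (by positivity) (by linarith) (by linarith)
  have b2 : |(1 / (2 * cp)) * P| ≤ (1 / (2 * cp)) * Mp := by
    rw [abs_mul, abs_of_pos (by positivity : (0:ℝ) < 1 / (2 * cp))]
    exact mul_le_mul_of_nonneg_left bP (by positivity)
  have b3 : |(1 / (2 * cm)) * M| ≤ (1 / (2 * cm)) * Mm := by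
    rw [abs_mul, abs_of_pos (by positivity : (0:ℝ) < 1 / (2 * cm))]
    exact mul_le_mul_of_nonneg_left bM (by positivity)
  have b4 : |R₀ * Ap| ≤ R₀ * (π / (Real.sqrt cp * Real.sqrt ε)) := by
    rw [abs_mul, abs_of_pos hR₀]
    exact mul_le_mul_of_nonneg_left hAp hR₀.le
  have b5 : |R₀ * Am| ≤ R₀ * (π / (Real.sqrt cm * Real.sqrt ε)) := by
    rw [abs_mul, abs_of_pos hR₀]
    exact mul_le_mul_of_nonneg_left hAm hR₀.le
  have hscp : (0:ℝ) < Real.sqrt cp := Real.sqrt_pos.2 hcp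
  have hscm : (0:ℝ) < Real.sqrt cm := Real.sqrt_pos.2 hcm
  set C : ℝ := π / Real.sqrt cp + π / Real.sqrt cm
      + (1 / (2 * cp)) * Mp + (1 / (2 * cm)) * Mm + 1 with hCd
  have hC2 : R₀ * (π / (Real.sqrt cp * Real.sqrt ε))
      + R₀ * (π / (Real.sqrt cm * Real.sqrt ε)) ≤ C * R₀ / Real.sqrt ε := by
    have eqn : R₀ * (π / (Real.sqrt cp * Real.sqrt ε))
        + R₀ * (π / (Real.sqrt cm * Real.sqrt ε))
        = (π / Real.sqrt cp + π / Real.sqrt cm) * R₀ / Real.sqrt ε := by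
      field_simp
    rw [eqn]
    have hle : π / Real.sqrt cp + π / Real.sqrt cm ≤ C := by
      rw [hCd]
      have h1 : 0 ≤ (1 / (2 * cp)) * Mp := by positivity
      have h2 : 0 ≤ (1 / (2 * cm)) * Mm := by positivity
      linarith
    gcongr
  have hC1 : (1 / (2 * cp)) * Mp + (1 / (2 * cm)) * Mm ≤ C := by
    rw [hCd]
    have h1 : 0 < π / Real.sqrt cp := by positivity
    have h2 : 0 < π / Real.sqrt cm := by positivity
    linarith
  rw [b1] at tri
  linarith
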